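/- Let C be a directed category, E a coideal of C (a downward-closed full subcategory), D the complementary ideal, K the maximal topology on D^op, and L a Grothendieck topology on E^op. Define J(x) = K(x) for x in D and J(x) = {sieves S on x in C^op with S ∩ E(x,−) ∈ L(x)} for x in E. Then J is a Grothendieck topology on C^op. -/

import Mathlib

open CategoryTheory

/-- Let `C` be a directed category (Lean convention: `C` is the opposite of the paper's
category, so Mathlib sieves correspond to the paper's sieves on `C^op`), `E` a coideal
of the paper's category given by a predicate `Q` (downward closed in the paper, i.e. in
Lean: `Q x` and `x ⟶ y` imply `Q y`), `D` the complementary ideal, `K` the maximal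
topology on `D`, and `L` a Grothendieck topology on `E`.  Define `J x = K x` (all
sieves) for `x ∈ D` and, for `x ∈ E`, `J x` consisting of the sieves `S` on `x` whose
restriction `S ∩ E(x,−)` lies in `L x`.  Then `J` is a Grothendieck topology on `C`;
i.e. there is a Grothendieck topology whose covering sieves are exactly as described. -/
theorem coideal_glued_topology
    {C : Type u} [SmallCategory C]
    (hdir : ∀ x y : C, Nonempty (x ⟶ y) → Nonempty (y ⟶ x) → x = y)
    (Q : C → Prop)
    (hcoideal : ∀ {x y : C}, Q x → (x ⟶ y) → Q y)
    (L : GrothendieckTopology (ObjectProperty.FullSubcategory Q)) :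
    ∃ J : GrothendieckTopology C, ∀ (x : C) (S : Sieve x),
      S ∈ J x ↔ ∀ hx : Q x,
        Sieve.functorPullback (ObjectProperty.ι Q)
          (X := ⟨x, hx⟩) S ∈ L ⟨x, hx⟩ := by
  classical
  refine ⟨{
    sieves := fun x => {S | ∀ hx : Q x,
      Sieve.functorPullback (ObjectProperty.ι Q) (X := ⟨x, hx⟩) S ∈ L ⟨x, hx⟩},
    top_mem' := ?_,
    pullback_stable' := ?_,
    transitive' := ?_ }, fun x S => Iff.rfl⟩
  · intro x hx
    have : Sieve.functorPullback (ObjectProperty.ι Q) (X := ⟨x, hx⟩)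
        (⊤ : Sieve x) = ⊤ := by
      ext; simp [Sieve.functorPullback]
    rw [this]
    exact L.top_mem _
  · intro x y S f hS hy
    have hx : Q x := hcoideal hy f
    let f' : (⟨y, hy⟩ : ObjectProperty.FullSubcategory Q) ⟶ ⟨x, hx⟩ := ObjectProperty.homMk f
    have key : Sieve.functorPullback (ObjectProperty.ι Q) (X := ⟨y, hy⟩)
        (S.pullback f)
        = Sieve.pullback f'
            (Sieve.functorPullback (ObjectProperty.ι Q) (X := ⟨x, hx⟩) S) := by
      ext z g
      exact Iff.rfl
    rw [key]
    exact L.pullback_stable _ (hS hx)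
  · intro x S hS R hR hx
    refine L.transitive (hS hx) _ ?_
    intro y f hf
    have hQy : Q y.obj := y.property
    have := hR hf hQy
    have key : Sieve.functorPullback (ObjectProperty.ι Q) (X := ⟨y.obj, hQy⟩)
        (R.pullback ((ObjectProperty.ι Q).map f))
        = Sieve.pullback f
            (Sieve.functorPullback (ObjectProperty.ι Q) (X := ⟨x, hx⟩) R) := by
      ext z g
      exact Iff.rfl
    rw [key] at this
    exact this
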